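/- arXiv:2105.12982 — 4 statements merged into one kernel-verified Lean document; each statement's English description precedes it below -/
import Mathlib

section
/- For every congestion game, Rosenthal's potential is an exact potential function: for every strategy profile s ∈ S₁×⋯×Sₙ, every player i ∈ N, and every alternative strategy s_i' ∈ S_i, it holds that Φ(s) − Φ(s_i', s_{−i}) = C_i(s) − C_i(s_i', s_{−i}), where (s_i', s_{−i}) denotes the profile obtained from s by replacing the i-th coordinate with s_i'. -/
open Finset

/-- The load of resource `e` under strategy profile `s`: the number of players using `e`. -/
def resourceLoad {n : ℕ} {E : Type*} [DecidableEq E] (s : Fin n → Finset E) (e : E) : ℕ :=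
  (Finset.univ.filter fun i => e ∈ s i).card

/-- Rosenthal's potential `Φ(s) = Σ_{e ∈ E} Σ_{k=1}^{ℓ_e(s)} c_e(k)`. -/
noncomputable def rosenthalPotential {n : ℕ} {E : Type*} [Fintype E] [DecidableEq E]
    (c : E → ℕ → ℝ) (s : Fin n → Finset E) : ℝ :=
  ∑ e : E, ∑ k ∈ Finset.Icc 1 (resourceLoad s e), c e k

/-- Player `i`'s cost `C_i(s) = Σ_{e ∈ s_i} c_e(ℓ_e(s))`. -/
noncomputable def playerCost {n : ℕ} {E : Type*} [DecidableEq E]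
    (c : E → ℕ → ℝ) (s : Fin n → Finset E) (i : Fin n) : ℝ :=
  ∑ e ∈ s i, c e (resourceLoad s e)

lemma load_split {n : ℕ} {E : Type*} [DecidableEq E] (f : Fin n → Finset E) (i : Fin n) (e : E) :
    resourceLoad f e
      = ((univ.erase i).filter fun j => e ∈ f j).card + (if e ∈ f i then 1 else 0) := by
  unfold resourceLoad
  conv_lhs => rw [← Finset.insert_erase (Finset.mem_univ i)]
  rw [Finset.filter_insert]
  split
  · rw [Finset.card_insert_of_notMem (by simp)]
  · simp

lemma load_update {n : ℕ} {E : Type*} [DecidableEq E] (s : Fin n → Finset E) (i : Fin n)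
    (t : Finset E) (e : E) :
    resourceLoad (Function.update s i t) e + (if e ∈ s i then 1 else 0)
      = resourceLoad s e + (if e ∈ t then 1 else 0) := by
  rw [load_split (Function.update s i t) i, load_split s i]
  have h1 : ((univ.erase i).filter fun j => e ∈ Function.update s i t j)
      = ((univ.erase i).filter fun j => e ∈ s j) := by
    apply Finset.filter_congr
    intro j hj
    rw [Function.update_of_ne (Finset.mem_erase.mp hj).1]
  rw [h1, Function.update_self]
  ring

/-- Rosenthal's potential is an exact potential function: for every
congestion game, every strategy profile `s`, every player `i`, and every alternative
strategy `t ∈ S i`, one has `Φ(s) − Φ(t, s₋ᵢ) = C_i(s) − C_i(t, s₋ᵢ)`. -/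
theorem rosenthal_exact_potential {n : ℕ} {E : Type*} [Fintype E] [DecidableEq E]
    (c : E → ℕ → ℝ) (S : Fin n → Finset (Finset E)) (hSne : ∀ i, (S i).Nonempty)
    (s : Fin n → Finset E) (hs : ∀ i, s i ∈ S i)
    (i : Fin n) (t : Finset E) (ht : t ∈ S i) :
    rosenthalPotential c s - rosenthalPotential c (Function.update s i t)
      = playerCost c s i - playerCost c (Function.update s i t) i := by
  have main : ∀ e : E,
      (∑ k ∈ Finset.Icc 1 (resourceLoad s e), c e k)
        - (∑ k ∈ Finset.Icc 1 (resourceLoad (Function.update s i t) e), c e k)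
      = (if e ∈ s i then c e (resourceLoad s e) else 0)
        - (if e ∈ t then c e (resourceLoad (Function.update s i t) e) else 0) := by
    intro e
    have hl := load_update s i t e
    by_cases h1 : e ∈ s i <;> by_cases h2 : e ∈ t <;> simp only [h1, h2, if_true, if_false] at hl ⊢
    · have h3 : resourceLoad (Function.update s i t) e = resourceLoad s e := by omega
      rw [h3]; ring
    · have h3 : resourceLoad s e = resourceLoad (Function.update s i t) e + 1 := by omega
      rw [h3, Finset.sum_Icc_succ_top (by omega)]
      ring
    · have h3 : resourceLoad (Function.update s i t) e = resourceLoad s e + 1 := by omega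
      rw [h3, Finset.sum_Icc_succ_top (by omega)]
      ring
    · have h3 : resourceLoad (Function.update s i t) e = resourceLoad s e := by omega
      rw [h3]; ring
  have hPhi : rosenthalPotential c s - rosenthalPotential c (Function.update s i t)
      = ∑ e : E, ((if e ∈ s i then c e (resourceLoad s e) else 0)
          - (if e ∈ t then c e (resourceLoad (Function.update s i t) e) else 0)) := by
    rw [rosenthalPotential, rosenthalPotential, ← Finset.sum_sub_distrib]
    exact Finset.sum_congr rfl fun e _ => main e
  rw [hPhi, Finset.sum_sub_distrib]
  congr 1
  · rw [playerCost, Finset.sum_ite_mem, Finset.univ_inter]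
  · rw [playerCost, Finset.sum_ite_mem, Finset.univ_inter, Function.update_self]
end

section
/- Let m ∈ ℕ, u ∈ ℕ^m, K ∈ ℕ with K ≥ 1, K₂ ≥ 0 a real number, and L(k,u) = {α ∈ ℕ^m : α_j ≤ u_j for all j, and Σ_j α_j = K}. Let c_j : ℕ → ℝ (j = 1,…,m) be non-decreasing cost functions, T ≥ 0, Φ̄(α) = Σ_{j=1}^m Σ_{t=1}^{α_j} c_j(t), and define ν : L(k,u) → ℝ by ν(α) = −((K₂/K²)·Σ_{j=1}^m α_j(α_j − 1) + T·Φ̄(α)). Then ν is M-concave on L(k,u): for all α, β ∈ L(k,u) and every index i with α_i > β_i, there exists an index j with α_j < β_j such that α − e_i + e_j ∈ L(k,u), β + e_i − e_j ∈ L(k,u), and ν(α) + ν(β) ≤ ν(α − e_i + e_j) + ν(β + e_i − e_j). -/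
open Finset

/-- `exchangeMove α i j = α − e_i + e_j`. -/
def exchangeMove {m : ℕ} (α : Fin m → ℕ) (i j : Fin m) : Fin m → ℕ :=
  fun l => α l + (if l = j then 1 else 0) - (if l = i then 1 else 0)

/-- Rosenthal's potential on resource load profiles:
`Φ̄(α) = Σ_{j=1}^m Σ_{t=1}^{α_j} c_j(t)`. -/
noncomputable def rosenthalLoad {m : ℕ} (c : Fin m → ℕ → ℝ) (α : Fin m → ℕ) : ℝ :=
  ∑ j : Fin m, ∑ t ∈ Finset.Icc 1 (α j), c j t

/-- The function `ν(α) = −((K₂/K²)·Σ_j α_j(α_j−1) + T·Φ̄(α))`. -/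
noncomputable def nuFun {m : ℕ} (c : Fin m → ℕ → ℝ) (K : ℕ) (K₂ T : ℝ)
    (α : Fin m → ℕ) : ℝ :=
  -((K₂ / (K : ℝ) ^ 2) * (∑ j, (α j : ℝ) * ((α j : ℝ) - 1)) + T * rosenthalLoad c α)

/-- The single-coordinate summand of `ν`. -/
noncomputable def fterm {m : ℕ} (c : Fin m → ℕ → ℝ) (q T : ℝ) (l : Fin m) (x : ℕ) : ℝ :=
  -(q * ((x : ℝ) * ((x : ℝ) - 1)) + T * ∑ t ∈ Finset.Icc 1 x, c l t)

lemma nuFun_eq_sum {m : ℕ} (c : Fin m → ℕ → ℝ) (K : ℕ) (K₂ T : ℝ) (α : Fin m → ℕ) :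
    nuFun c K K₂ T α = ∑ l, fterm c (K₂ / (K : ℝ) ^ 2) T l (α l) := by
  unfold nuFun rosenthalLoad fterm
  rw [Finset.mul_sum, Finset.mul_sum, ← Finset.sum_add_distrib, ← Finset.sum_neg_distrib]

lemma c_mono (c : ℕ → ℝ) (hc : ∀ t, 1 ≤ t → c t ≤ c (t + 1)) :
    ∀ s t, 1 ≤ s → s ≤ t → c s ≤ c t := by
  intro s t hs hst
  induction t with
  | zero => omega
  | succ n ih =>
      rcases Nat.lt_or_ge s (n + 1) with h | h
      · exact le_trans (ih (by omega)) (hc n (by omega))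
      · have : s = n + 1 := by omega
        simp [this]

lemma fterm_delta {m : ℕ} (c : Fin m → ℕ → ℝ) (q T : ℝ) (l : Fin m) (x : ℕ) :
    fterm c q T l (x + 1) - fterm c q T l x = -(q * (2 * (x : ℝ)) + T * c l (x + 1)) := by
  unfold fterm
  rw [Finset.sum_Icc_succ_top (by omega : 1 ≤ x + 1)]
  push_cast
  ring

lemma fterm_concave {m : ℕ} (c : Fin m → ℕ → ℝ) (q T : ℝ) (hq : 0 ≤ q) (hT : 0 ≤ T)
    (hc : ∀ j, ∀ t, 1 ≤ t → c j t ≤ c j (t + 1)) (l : Fin m) {x y : ℕ} (hxy : x ≤ y) :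
    fterm c q T l (y + 1) - fterm c q T l y ≤ fterm c q T l (x + 1) - fterm c q T l x := by
  rw [fterm_delta, fterm_delta]
  have h1 : q * (2 * (x : ℝ)) ≤ q * (2 * (y : ℝ)) := by
    apply mul_le_mul_of_nonneg_left _ hq
    have : (x : ℝ) ≤ y := by exact_mod_cast hxy
    linarith
  have h2 : c l (x + 1) ≤ c l (y + 1) := c_mono (c l) (hc l) _ _ (by omega) (by omega)
  have h3 : T * c l (x + 1) ≤ T * c l (y + 1) := mul_le_mul_of_nonneg_left h2 hT
  linarith

lemma two_point_sum {m : ℕ} (F G : Fin m → ℝ) (i j : Fin m) (hij : i ≠ j)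
    (h : ∀ l, l ≠ i → l ≠ j → F l = G l) :
    ∑ l, F l = ∑ l, G l + (F i - G i) + (F j - G j) := by
  have key : ∑ l, (F l - G l) = (F i - G i) + (F j - G j) := by
    calc ∑ l, (F l - G l) = ∑ l ∈ ({i, j} : Finset (Fin m)), (F l - G l) := by
          refine (Finset.sum_subset (Finset.subset_univ _) ?_).symm
          intro l _ hl
          simp only [Finset.mem_insert, Finset.mem_singleton, not_or] at hl
          rw [h l hl.1 hl.2]; ring
      _ = (F i - G i) + (F j - G j) := Finset.sum_pair hij
  have h2 : ∑ l, (F l - G l) = ∑ l, F l - ∑ l, G l := Finset.sum_sub_distrib F G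
  linarith

/-- with non-decreasing cost functions `c_j`, `T ≥ 0`, `K ≥ 1`, `K₂ ≥ 0`,
the function `ν(α) = −((K₂/K²)·Σ_j α_j(α_j−1) + T·Φ̄(α))` is M-concave on
`L(k,u) = {α ∈ ℕ^m : α ≤ u, Σ_j α_j = K}`: for all `α, β ∈ L(k,u)` and every `i` with
`α_i > β_i` there is `j` with `α_j < β_j` such that `α − e_i + e_j ∈ L(k,u)`,
`β + e_i − e_j ∈ L(k,u)`, and `ν(α) + ν(β) ≤ ν(α − e_i + e_j) + ν(β + e_i − e_j)`. -/
theorem nu_M_concave {m : ℕ} (u : Fin m → ℕ) (K : ℕ) (hK : 1 ≤ K)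
    (K₂ : ℝ) (hK₂ : 0 ≤ K₂)
    (c : Fin m → ℕ → ℝ) (hc : ∀ j, ∀ t, 1 ≤ t → c j t ≤ c j (t + 1))
    (T : ℝ) (hT : 0 ≤ T) :
    ∀ α β : Fin m → ℕ,
      (∀ j, α j ≤ u j) → (∑ j, α j) = K →
      (∀ j, β j ≤ u j) → (∑ j, β j) = K →
      ∀ i : Fin m, β i < α i →
        ∃ j : Fin m, α j < β j ∧
          (∀ l, exchangeMove α i j l ≤ u l) ∧ (∑ l, exchangeMove α i j l) = K ∧
          (∀ l, exchangeMove β j i l ≤ u l) ∧ (∑ l, exchangeMove β j i l) = K ∧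
          nuFun c K K₂ T α + nuFun c K K₂ T β
            ≤ nuFun c K K₂ T (exchangeMove α i j) + nuFun c K K₂ T (exchangeMove β j i) := by
  intro α β hαu hαK hβu hβK i hi
  -- find j with α j < β j
  obtain ⟨j, hj⟩ : ∃ j, α j < β j := by
    by_contra h
    push_neg at h
    have hlt : ∑ l, β l < ∑ l, α l :=
      Finset.sum_lt_sum (fun l _ => h l) ⟨i, Finset.mem_univ i, hi⟩
    omega
  have hij : i ≠ j := by
    intro h; rw [h] at hi; omega
  have hαi : 1 ≤ α i := by omega
  have hβj : 1 ≤ β j := by omega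
  refine ⟨j, hj, ?_, ?_, ?_, ?_, ?_⟩
  · intro l
    by_cases h1 : l = i
    · subst h1; simp [exchangeMove, hij]
      have := hαu l; omega
    · by_cases h2 : l = j
      · subst h2; simp [exchangeMove, h1]
        have := hβu l; omega
      · simp [exchangeMove, h1, h2]; exact hαu l
  · have key : ∀ l, exchangeMove α i j l + (if l = i then 1 else 0)
        = α l + (if l = j then 1 else 0) := by
      intro l
      by_cases h1 : l = i
      · subst h1; simp [exchangeMove, hij]; omega
      · by_cases h2 : l = j <;> simp [exchangeMove, h1, h2, Ne.symm hij]
    have hs : ∑ l, (exchangeMove α i j l + if l = i then 1 else 0)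
        = ∑ l, (α l + if l = j then 1 else 0) :=
      Finset.sum_congr rfl (fun l _ => key l)
    rw [Finset.sum_add_distrib, Finset.sum_add_distrib] at hs
    simp only [Finset.sum_ite_eq', Finset.mem_univ, if_true] at hs
    omega
  · intro l
    by_cases h1 : l = j
    · subst h1; simp [exchangeMove, Ne.symm hij]
      have := hβu l; omega
    · by_cases h2 : l = i
      · subst h2; simp [exchangeMove, h1]
        have := hαu l
        have := hi; omega
      · simp [exchangeMove, h1, h2]; exact hβu l
  · have key : ∀ l, exchangeMove β j i l + (if l = j then 1 else 0)
        = β l + (if l = i then 1 else 0) := by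
      intro l
      by_cases h1 : l = j
      · subst h1; simp [exchangeMove, Ne.symm hij]; omega
      · by_cases h2 : l = i <;> simp [exchangeMove, h1, h2, hij]
    have hs : ∑ l, (exchangeMove β j i l + if l = j then 1 else 0)
        = ∑ l, (β l + if l = i then 1 else 0) :=
      Finset.sum_congr rfl (fun l _ => key l)
    rw [Finset.sum_add_distrib, Finset.sum_add_distrib] at hs
    simp only [Finset.sum_ite_eq', Finset.mem_univ, if_true] at hs
    omega
  · -- the value inequality
    set q := K₂ / (K : ℝ) ^ 2 with hq'
    have hq : 0 ≤ q := by
      apply div_nonneg hK₂ (by positivity)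
    set f := fterm c q T with hf'
    have eα : exchangeMove α i j i = α i - 1 := by simp [exchangeMove, hij]
    have eα2 : exchangeMove α i j j = α j + 1 := by simp [exchangeMove, Ne.symm hij]
    have eβ : exchangeMove β j i j = β j - 1 := by simp [exchangeMove, Ne.symm hij]
    have eβ2 : exchangeMove β j i i = β i + 1 := by simp [exchangeMove, hij]
    have sumα : ∑ l, f l (exchangeMove α i j l)
        = ∑ l, f l (α l) + (f i (α i - 1) - f i (α i)) + (f j (α j + 1) - f j (α j)) := by
      have := two_point_sum (fun l => f l (exchangeMove α i j l)) (fun l => f l (α l)) i j hij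
        (by intro l h1 h2; simp [exchangeMove, h1, h2])
      simpa only [eα, eα2] using this
    have sumβ : ∑ l, f l (exchangeMove β j i l)
        = ∑ l, f l (β l) + (f j (β j - 1) - f j (β j)) + (f i (β i + 1) - f i (β i)) := by
      have := two_point_sum (fun l => f l (exchangeMove β j i l)) (fun l => f l (β l)) j i
        (Ne.symm hij) (by intro l h1 h2; simp [exchangeMove, h1, h2])
      simpa only [eβ, eβ2] using this
    -- concavity estimates
    have obi : α i = (α i - 1) + 1 := by omega
    have obj : β j = (β j - 1) + 1 := by omega
    have ci : f i (α i) - f i (α i - 1) ≤ f i (β i + 1) - f i (β i) := by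
      have h := fterm_concave c q T hq hT hc i (show β i ≤ α i - 1 by omega)
      rw [← obi] at h
      exact h
    have cj : f j (β j) - f j (β j - 1) ≤ f j (α j + 1) - f j (α j) := by
      have h := fterm_concave c q T hq hT hc j (show α j ≤ β j - 1 by omega)
      rw [← obj] at h
      exact h
    rw [nuFun_eq_sum, nuFun_eq_sum, nuFun_eq_sum, nuFun_eq_sum, ← hq', ← hf', sumα, sumβ]
    linarith
end

section
/- Let n, d ∈ ℕ and let R ⊆ {α ∈ ℕ^n : α_i ≤ d for all i} be a discrete polymatroid, i.e.: (i) the zero vector is in R; (ii) if y ∈ R and x ≤ y (coordinatewise) then x ∈ R; (iii) if x, y ∈ R with Σ_i x_i < Σ_i y_i, then there exists w ∈ R with x < w ≤ x ∨ y (coordinatewise maximum; x < w means x ≤ w and x ≠ w). For I ⊆ [n]×[d], define α(I) ∈ ℕ^n by α(I)_i = |{j ∈ [d] : (i,j) ∈ I}|. Then the family 𝕀 = {I ⊆ [n]×[d] : α(I) ∈ R} is the family of independent sets of a matroid on the ground set [n]×[d]: ∅ ∈ 𝕀; if I ∈ 𝕀 and J ⊆ I then J ∈ 𝕀; and if I,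 J ∈ 𝕀 with |I| > |J| then there exists an element e ∈ I \ J with J ∪ {e} ∈ 𝕀. -/
open Finset

/-- For `I ⊆ [n]×[d]`, the multiplicity vector `α(I) ∈ ℕ^n` defined by
`α(I)_i = |{j : (i,j) ∈ I}|`. -/
def multVec {n d : ℕ} (I : Finset (Fin n × Fin d)) : Fin n → ℕ :=
  fun i => (I.filter fun e => e.1 = i).card

/-- if `R ⊆ {α ∈ ℕ^n : α_i ≤ d}` is a discrete polymatroid, then
`𝕀 = {I ⊆ [n]×[d] : α(I) ∈ R}` is the family of independent sets of a matroid on the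
ground set `[n]×[d]`: it contains the empty set, is downward closed, and satisfies the
independent set exchange axiom. -/
theorem polymatroid_polarization_matroid (n d : ℕ) (R : Set ((Fin n) → ℕ))
    (hbd : ∀ α ∈ R, ∀ i, α i ≤ d)
    (h0 : (fun _ => 0) ∈ R)
    (hdown : ∀ y ∈ R, ∀ x : Fin n → ℕ, (∀ i, x i ≤ y i) → x ∈ R)
    (hexch : ∀ x ∈ R, ∀ y ∈ R, (∑ i, x i) < (∑ i, y i) →
      ∃ w ∈ R, (∀ i, x i ≤ w i) ∧ x ≠ w ∧ (∀ i, w i ≤ max (x i) (y i))) :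
    (multVec (∅ : Finset (Fin n × Fin d)) ∈ R) ∧
    (∀ I : Finset (Fin n × Fin d), multVec I ∈ R →
      ∀ J ⊆ I, multVec J ∈ R) ∧
    (∀ I J : Finset (Fin n × Fin d), multVec I ∈ R → multVec J ∈ R →
      J.card < I.card → ∃ e ∈ I \ J, multVec (insert e J) ∈ R) := by
  refine ⟨?_, ?_, ?_⟩
  · have h : multVec (∅ : Finset (Fin n × Fin d)) = fun _ => 0 := by
      funext i; simp [multVec]
    rw [h]; exact h0
  · intro I hI J hJ
    exact hdown _ hI _ (fun i => Finset.card_le_card (Finset.filter_subset_filter _ hJ))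
  · intro I J hI hJ hcard
    have hsum : ∀ K : Finset (Fin n × Fin d), ∑ i, multVec K i = K.card := by
      intro K
      rw [Finset.card_eq_sum_card_fiberwise
        (f := fun e => e.1) (t := Finset.univ) (fun x _ => Finset.mem_univ _)]
      rfl
    obtain ⟨w, hwR, hle, hne, hmax⟩ := hexch _ hJ _ hI (by rw [hsum, hsum]; exact hcard)
    have hex : ∃ i0, multVec J i0 < w i0 := by
      by_contra h
      push_neg at h
      exact hne (funext fun i => le_antisymm (hle i) (h i))
    obtain ⟨i0, hi0⟩ := hex
    have hIJ : ¬ (I.filter fun e => e.1 = i0) ⊆ (J.filter fun e => e.1 = i0) := by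
      intro hsub
      have hcard' := Finset.card_le_card hsub
      have hwle : w i0 ≤ multVec J i0 := le_trans (hmax i0) (max_le le_rfl hcard')
      omega
    obtain ⟨e, heI, heJ⟩ := Finset.not_subset.mp hIJ
    simp only [Finset.mem_filter] at heI
    have he1 : e.1 = i0 := heI.2
    have heJ' : e ∉ J := fun h => heJ (Finset.mem_filter.mpr ⟨h, he1⟩)
    refine ⟨e, Finset.mem_sdiff.mpr ⟨heI.1, heJ'⟩, ?_⟩
    apply hdown _ hwR
    intro i
    by_cases hi : i = i0
    · have heq : multVec (insert e J) i0 = multVec J i0 + 1 := by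
        simp only [multVec, Finset.filter_insert, if_pos he1,
          Finset.card_insert_of_notMem heJ]
      rw [hi, heq]; omega
    · have heq : multVec (insert e J) i = multVec J i := by
        simp only [multVec, Finset.filter_insert,
          if_neg (show ¬ e.1 = i by rw [he1]; exact fun h => hi h.symm)]
      rw [heq]; exact hle i
end

section
/- Consider a symmetric congestion game with n players and common strategy set P, temperature T ≥ 0, Gibbs distribution π(s) = e^{−T·Φ(s)}/Z, and relaxed logit dynamics kernel Q. For a strategy load profile α (α ∈ ℕ^P with Σ_p α_p = n), let S(α) = {s ∈ Pⁿ : z_p(s) = α_p for all p}, write Φ(α) for the common potential value of profiles in S(α), and π̄(α) = Σ_{x ∈ S(α)} π(x). Let α and β be adjacent load profiles with β = α − e_p + e_{p'} for distinct strategies p, p' ∈ P and α_p ≥ 1. Then: (a) Σ_{x ∈ S(α), y ∈ S(β)} π(x)·Q(x,y) = π̄(α) · (1/2) · (α_p/n) · e^{−T·Φ(β)} / Z'(α,p), where Z'(α,p) = Σ_{r ∈ P} e^{−T·Φ(α − e_p + e_r)}; and (b) consequently, for every x ∈ S(α) and y ∈ S(β) such that y is obtained from x by changing the strategy of a single player from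 p to p', one has Q(x,y) / Q̄(α,β) = 1/α_p ≥ 1/n, where Q̄(α,β) = π̄(α)^{−1} · Σ_{x ∈ S(α), y ∈ S(β)} π(x)·Q(x,y) is the projection-chain transition probability. -/
open Finset

section

variable {n : ℕ} {E : Type*} [Fintype E] [DecidableEq E]

/-- A strategy profile of a symmetric congestion game with common strategy set
`P ⊆ 2^E`. -/
abbrev SymProfile (n : ℕ) {E : Type*} [DecidableEq E] (P : Finset (Finset E)) :=
  Fin n → {A : Finset E // A ∈ P}

variable {P : Finset (Finset E)}

/-- The load `ℓ_e(s)`: the number of players using resource `e` in profile `s`. -/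
def sload (s : SymProfile n P) (e : E) : ℕ :=
  (Finset.univ.filter fun i => e ∈ (s i : Finset E)).card

/-- Rosenthal's potential `Φ(s) = Σ_{e ∈ E} Σ_{k=1}^{ℓ_e(s)} c_e(k)`. -/
noncomputable def sPhi (c : E → ℕ → ℝ) (s : SymProfile n P) : ℝ :=
  ∑ e : E, ∑ k ∈ Finset.Icc 1 (sload s e), c e k

/-- The strategy load `z_p(s) = |{i : s_i = p}|`. -/
def zload (s : SymProfile n P) (p : {A : Finset E // A ∈ P}) : ℕ :=
  (Finset.univ.filter fun i => s i = p).card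

/-- `S(α)`: the set of strategy profiles with strategy load profile `α`. -/
def profilesWithLoad (n : ℕ) (P : Finset (Finset E)) (α : {A : Finset E // A ∈ P} → ℕ) :
    Finset (SymProfile n P) :=
  Finset.univ.filter fun s => ∀ p, zload s p = α p

/-- `loadMove α p r = α − e_p + e_r` on strategy load profiles. -/
def loadMove (α : {A : Finset E // A ∈ P} → ℕ) (p r : {A : Finset E // A ∈ P}) :
    {A : Finset E // A ∈ P} → ℕ :=
  fun l => α l + (if l = r then 1 else 0) - (if l = p then 1 else 0)

/-- The normalizing constant `Z_i(s_{−i}) = Σ_{r ∈ P} e^{−T·Φ(r, s_{−i})}`. -/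
noncomputable def sZi (c : E → ℕ → ℝ) (T : ℝ) (s : SymProfile n P) (i : Fin n) : ℝ :=
  ∑ r : {A : Finset E // A ∈ P}, Real.exp (-T * sPhi c (Function.update s i r))

/-- The relaxed logit dynamics kernel. -/
noncomputable def relaxedLogitKernel (c : E → ℕ → ℝ) (T : ℝ)
    (s t : SymProfile n P) : ℝ :=
  (1 / (2 * (n : ℝ) ^ 2)) *
      ((Finset.univ.filter fun ij : Fin n × Fin n => s ∘ Equiv.swap ij.1 ij.2 = t).card : ℝ)
    + (1 / (2 * (n : ℝ))) *
      ∑ i ∈ Finset.univ.filter fun i : Fin n => ∀ j, j ≠ i → t j = s j,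
        Real.exp (-T * sPhi c t) / sZi c T s i

/-- The partition function `Z = Σ_t e^{−T·Φ(t)}`. -/
noncomputable def sZ (c : E → ℕ → ℝ) (T : ℝ) (n : ℕ) (P : Finset (Finset E)) : ℝ :=
  ∑ t : SymProfile n P, Real.exp (-T * sPhi c t)

/-- The Gibbs distribution `π(s) = e^{−T·Φ(s)}/Z`. -/
noncomputable def sGibbs (c : E → ℕ → ℝ) (T : ℝ) (s : SymProfile n P) : ℝ :=
  Real.exp (-T * sPhi c s) / sZ c T n P


private lemma zload_sum_erase (x : SymProfile n P) (i : Fin n) (q : {A : Finset E // A ∈ P}) :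
    zload x q = (∑ j ∈ Finset.univ.erase i, if x j = q then 1 else 0)
      + (if x i = q then 1 else 0) := by
  rw [zload, Finset.card_filter, ← Finset.sum_erase_add _ _ (Finset.mem_univ i)]

private lemma zload_update (x : SymProfile n P) (i : Fin n) (r q : {A : Finset E // A ∈ P}) :
    zload (Function.update x i r) q
      = zload x q + (if r = q then 1 else 0) - (if x i = q then 1 else 0) := by
  have h1 := zload_sum_erase x i q
  have h2 := zload_sum_erase (Function.update x i r) i q
  have hm : (∑ j ∈ Finset.univ.erase i, if Function.update x i r j = q then 1 else 0)
      = ∑ j ∈ Finset.univ.erase i, if x j = q then 1 else 0 :=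
    Finset.sum_congr rfl fun j hj => by
      rw [Function.update_of_ne (Finset.ne_of_mem_erase hj)]
  rw [hm, Function.update_self] at h2
  rw [h1, h2]
  split_ifs <;> omega

private lemma zload_update_of_load {α : {A : Finset E // A ∈ P} → ℕ}
    {x : SymProfile n P} (hx : ∀ q, zload x q = α q) {i : Fin n}
    {p : {A : Finset E // A ∈ P}} (hxi : x i = p) (r : {A : Finset E // A ∈ P}) :
    ∀ q, zload (Function.update x i r) q = loadMove α p r q := by
  intro q
  rw [zload_update, hx, hxi, loadMove]
  have e1 : (if r = q then 1 else 0 : ℕ) = if q = r then 1 else 0 := by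
    by_cases h : r = q <;> simp [h, eq_comm]
  have e2 : (if p = q then 1 else 0 : ℕ) = if q = p then 1 else 0 := by
    by_cases h : p = q <;> simp [h, eq_comm]
  rw [e1, e2]

private lemma mem_pwl {α : {A : Finset E // A ∈ P} → ℕ} {s : SymProfile n P} :
    s ∈ profilesWithLoad n P α ↔ ∀ q, zload s q = α q := by
  simp [profilesWithLoad]

private lemma zload_comp_perm (s : SymProfile n P) (e : Equiv.Perm (Fin n))
    (q : {A : Finset E // A ∈ P}) :
    zload (s ∘ e) q = zload s q := by
  unfold zload
  apply Finset.card_bij (fun i _ => e i)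
  · intro a ha
    simp only [Finset.mem_filter, Finset.mem_univ, true_and, Function.comp_apply] at ha ⊢
    exact ha
  · intro a _ b _ hab
    exact e.injective hab
  · intro b hb
    simp only [Finset.mem_filter, Finset.mem_univ, true_and, Function.comp_apply] at hb ⊢
    exact ⟨e.symm b, by simpa using hb, by simp⟩

private lemma swap_card_zero {α : {A : Finset E // A ∈ P} → ℕ}
    {p p' : {A : Finset E // A ∈ P}} (hpp' : p ≠ p') (hαp : 1 ≤ α p)
    {x y : SymProfile n P} (hx : ∀ q, zload x q = α q)
    (hy : ∀ q, zload y q = loadMove α p p' q) :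
    (Finset.univ.filter fun ij : Fin n × Fin n => x ∘ Equiv.swap ij.1 ij.2 = y) = ∅ := by
  rw [Finset.filter_eq_empty_iff]
  rintro ij -
  intro h
  have h1 := hy p
  rw [← h, zload_comp_perm, hx, loadMove] at h1
  rw [if_neg hpp', if_pos rfl] at h1
  omega

private lemma key_balance {x y : SymProfile n P} (i : Fin n)
    (h : ∀ j, j ≠ i → y j = x j) (q : {A : Finset E // A ∈ P}) :
    zload x q + (if y i = q then 1 else 0) = zload y q + (if x i = q then 1 else 0) := by
  rw [zload_sum_erase x i q, zload_sum_erase y i q]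
  have hm : (∑ j ∈ Finset.univ.erase i, if y j = q then 1 else 0)
      = ∑ j ∈ Finset.univ.erase i, if x j = q then 1 else 0 :=
    Finset.sum_congr rfl fun j hj => by rw [h j (Finset.ne_of_mem_erase hj)]
  rw [hm]
  ring

private lemma eq_update_of_agree {α : {A : Finset E // A ∈ P} → ℕ}
    {p p' : {A : Finset E // A ∈ P}} (hpp' : p ≠ p') (hαp : 1 ≤ α p)
    {x y : SymProfile n P} (hx : ∀ q, zload x q = α q)
    (hy : ∀ q, zload y q = loadMove α p p' q)
    (i : Fin n) (h : ∀ j, j ≠ i → y j = x j) :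
    x i = p ∧ y = Function.update x i p' := by
  have hp := key_balance i h p
  rw [hx, hy, loadMove, if_neg hpp', if_pos rfl] at hp
  have hxi : x i = p := by
    by_cases h1 : x i = p
    · exact h1
    · by_cases h2 : y i = p <;> simp only [h1, h2, if_true, if_false] at hp <;> omega
  have hp' := key_balance i h p'
  have hxip' : ¬ (x i = p') := by rw [hxi]; exact hpp'
  rw [hx, hy, loadMove, if_pos rfl, if_neg (Ne.symm hpp'), if_neg hxip'] at hp'
  have hyi : y i = p' := by
    by_cases h2 : y i = p'
    · exact h2
    · simp only [h2, if_false] at hp'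
      omega
  refine ⟨hxi, funext fun j => ?_⟩
  by_cases hj : j = i
  · subst hj; rw [Function.update_self, hyi]
  · rw [Function.update_of_ne hj, h j hj]

private lemma Q_update (c : E → ℕ → ℝ) (T : ℝ)
    (PhiL : ({A : Finset E // A ∈ P} → ℕ) → ℝ)
    (hPhiL : ∀ γ : {A : Finset E // A ∈ P} → ℕ, ∀ s : SymProfile n P,
      (∀ q, zload s q = γ q) → sPhi c s = PhiL γ)
    {α : {A : Finset E // A ∈ P} → ℕ}
    {p p' : {A : Finset E // A ∈ P}} (hpp' : p ≠ p') (hαp : 1 ≤ α p)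
    {x : SymProfile n P} (hx : ∀ q, zload x q = α q) {i : Fin n} (hxi : x i = p) :
    relaxedLogitKernel c T x (Function.update x i p')
      = (1 / (2 * (n : ℝ))) * (Real.exp (-T * PhiL (loadMove α p p'))
          / ∑ r : {A : Finset E // A ∈ P}, Real.exp (-T * PhiL (loadMove α p r))) := by
  have hy : ∀ q, zload (Function.update x i p') q = loadMove α p p' q :=
    zload_update_of_load hx hxi p'
  unfold relaxedLogitKernel
  rw [swap_card_zero hpp' hαp hx hy]
  have hfil : (Finset.univ.filter fun i' : Fin n =>
      ∀ j, j ≠ i' → Function.update x i p' j = x j) = {i} := by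
    ext i'
    simp only [Finset.mem_filter, Finset.mem_univ, true_and, Finset.mem_singleton]
    constructor
    · intro hall
      by_contra hii
      have h2 := hall i (fun hc => hii hc.symm)
      rw [Function.update_self, hxi] at h2
      exact hpp' h2.symm
    · rintro rfl j hj
      rw [Function.update_of_ne hj]
  rw [hfil, Finset.sum_singleton]
  have hZ : sZi c T x i
      = ∑ r : {A : Finset E // A ∈ P}, Real.exp (-T * PhiL (loadMove α p r)) := by
    unfold sZi
    exact Finset.sum_congr rfl fun r _ => by
      rw [hPhiL (loadMove α p r) _ (zload_update_of_load hx hxi r)]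
  rw [hZ, hPhiL (loadMove α p p') _ hy]
  simp

private lemma Q_zero (c : E → ℕ → ℝ) (T : ℝ)
    {α : {A : Finset E // A ∈ P} → ℕ}
    {p p' : {A : Finset E // A ∈ P}} (hpp' : p ≠ p') (hαp : 1 ≤ α p)
    {x y : SymProfile n P} (hx : ∀ q, zload x q = α q)
    (hy : ∀ q, zload y q = loadMove α p p' q)
    (hno : ∀ i, ¬ (x i = p ∧ y = Function.update x i p')) :
    relaxedLogitKernel c T x y = 0 := by
  unfold relaxedLogitKernel
  rw [swap_card_zero hpp' hαp hx hy]
  have hfil : (Finset.univ.filter fun i : Fin n => ∀ j, j ≠ i → y j = x j) = ∅ := by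
    rw [Finset.filter_eq_empty_iff]
    rintro i - hall
    exact hno i (eq_update_of_agree hpp' hαp hx hy i hall)
  rw [hfil]
  simp

/-- projection chain transition probabilities of the relaxed logit
dynamics between adjacent strategy load profiles `α` and `β = α − e_p + e_{p'}`:
(a) `Σ_{x ∈ S(α), y ∈ S(β)} π(x)·Q(x,y) = π̄(α)·(1/2)·(α_p/n)·e^{−T·Φ(β)}/Z'(α,p)`
where `Z'(α,p) = Σ_{r ∈ P} e^{−T·Φ(α − e_p + e_r)}`; and (b) for every `x ∈ S(α)` and
`y ∈ S(β)` obtained from `x` by changing a single player's strategy from `p` to `p'`,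
`Q(x,y)/Q̄(α,β) = 1/α_p ≥ 1/n`. -/
theorem relaxedLogit_projection_chain
    (hn : 0 < n) (hP : P.Nonempty) (c : E → ℕ → ℝ) (T : ℝ) (hT : 0 ≤ T)
    (PhiL : ({A : Finset E // A ∈ P} → ℕ) → ℝ)
    (hPhiL : ∀ γ : {A : Finset E // A ∈ P} → ℕ, ∀ s : SymProfile n P,
      (∀ p, zload s p = γ p) → sPhi c s = PhiL γ)
    (α : {A : Finset E // A ∈ P} → ℕ) (hα : (∑ p, α p) = n)
    (p p' : {A : Finset E // A ∈ P}) (hpp' : p ≠ p') (hαp : 1 ≤ α p)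
    (β : {A : Finset E // A ∈ P} → ℕ) (hβ : β = loadMove α p p') :
    (∑ x ∈ profilesWithLoad n P α, ∑ y ∈ profilesWithLoad n P β,
        sGibbs c T x * relaxedLogitKernel c T x y
      = (∑ x ∈ profilesWithLoad n P α, sGibbs c T x) * (1 / 2) * ((α p : ℝ) / (n : ℝ))
          * Real.exp (-T * PhiL β)
          / (∑ r : {A : Finset E // A ∈ P}, Real.exp (-T * PhiL (loadMove α p r)))) ∧
    (∀ x ∈ profilesWithLoad n P α, ∀ y ∈ profilesWithLoad n P β,
      ∀ i : Fin n, x i = p → y = Function.update x i p' →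
        relaxedLogitKernel c T x y
            / ((∑ x' ∈ profilesWithLoad n P α, sGibbs c T x')⁻¹
              * ∑ x' ∈ profilesWithLoad n P α, ∑ y' ∈ profilesWithLoad n P β,
                  sGibbs c T x' * relaxedLogitKernel c T x' y')
          = 1 / (α p : ℝ) ∧
        (1 : ℝ) / (n : ℝ) ≤ 1 / (α p : ℝ)) := by
  haveI hPne : Nonempty {A : Finset E // A ∈ P} := ⟨⟨hP.choose, hP.choose_spec⟩⟩
  haveI : Nonempty (SymProfile n P) := ⟨fun _ => Classical.choice hPne⟩
  subst hβ
  have hZ'pos : (0 : ℝ) <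
      ∑ r : {A : Finset E // A ∈ P}, Real.exp (-T * PhiL (loadMove α p r)) :=
    Finset.sum_pos (fun r _ => Real.exp_pos _) Finset.univ_nonempty
  have hepos : (0 : ℝ) < Real.exp (-T * PhiL (loadMove α p p')) := Real.exp_pos _
  have hrow : ∀ x ∈ profilesWithLoad n P α,
      ∑ y ∈ profilesWithLoad n P (loadMove α p p'), relaxedLogitKernel c T x y
        = (α p : ℝ) * ((1 / (2 * (n : ℝ))) * (Real.exp (-T * PhiL (loadMove α p p'))
            / ∑ r : {A : Finset E // A ∈ P}, Real.exp (-T * PhiL (loadMove α p r)))) := by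
    intro x hx
    rw [mem_pwl] at hx
    have himg : (Finset.univ.filter fun i : Fin n => x i = p).image
        (fun i => Function.update x i p') ⊆ profilesWithLoad n P (loadMove α p p') := by
      intro y hy
      rw [Finset.mem_image] at hy
      obtain ⟨i, hi, rfl⟩ := hy
      rw [mem_pwl]
      exact zload_update_of_load hx (by simpa using hi) p'
    have hQz : ∀ y ∈ profilesWithLoad n P (loadMove α p p'),
        y ∉ (Finset.univ.filter fun i : Fin n => x i = p).image
          (fun i => Function.update x i p') → relaxedLogitKernel c T x y = 0 := by
      intro y hy hny
      exact Q_zero c T hpp' hαp hx (mem_pwl.mp hy)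
        (fun i h => hny (Finset.mem_image.mpr ⟨i, by simp [h.1], h.2.symm⟩))
    rw [← Finset.sum_subset himg hQz]
    have hinj : ∀ a ∈ Finset.univ.filter fun i : Fin n => x i = p,
        ∀ b ∈ Finset.univ.filter fun i : Fin n => x i = p,
        Function.update x a p' = Function.update x b p' → a = b := by
      intro a ha b hb hab
      by_contra hne
      have hc := congrFun hab a
      rw [Function.update_self, Function.update_of_ne hne] at hc
      have hxa : x a = p := by simpa using ha
      exact hpp' ((hc.trans hxa).symm)
    rw [Finset.sum_image hinj]
    have hconst : ∀ i ∈ Finset.univ.filter fun i : Fin n => x i = p,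
        relaxedLogitKernel c T x (Function.update x i p')
          = (1 / (2 * (n : ℝ))) * (Real.exp (-T * PhiL (loadMove α p p'))
            / ∑ r : {A : Finset E // A ∈ P}, Real.exp (-T * PhiL (loadMove α p r))) := by
      intro i hi
      exact Q_update c T PhiL hPhiL hpp' hαp hx (by simpa using hi)
    rw [Finset.sum_congr rfl hconst, Finset.sum_const, nsmul_eq_mul]
    have hcard : (Finset.univ.filter fun i : Fin n => x i = p).card = α p := hx p
    rw [hcard]
  have hA : ∑ x ∈ profilesWithLoad n P α,
      ∑ y ∈ profilesWithLoad n P (loadMove α p p'),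
        sGibbs c T x * relaxedLogitKernel c T x y
      = (∑ x ∈ profilesWithLoad n P α, sGibbs c T x) * (1 / 2) * ((α p : ℝ) / (n : ℝ))
          * Real.exp (-T * PhiL (loadMove α p p'))
          / (∑ r : {A : Finset E // A ∈ P}, Real.exp (-T * PhiL (loadMove α p r))) := by
    have h1 : ∀ x ∈ profilesWithLoad n P α,
        ∑ y ∈ profilesWithLoad n P (loadMove α p p'),
          sGibbs c T x * relaxedLogitKernel c T x y
        = sGibbs c T x * ((α p : ℝ) * ((1 / (2 * (n : ℝ)))
            * (Real.exp (-T * PhiL (loadMove α p p'))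
              / ∑ r : {A : Finset E // A ∈ P}, Real.exp (-T * PhiL (loadMove α p r))))) := by
      intro x hx
      rw [← Finset.mul_sum, hrow x hx]
    rw [Finset.sum_congr rfl h1, ← Finset.sum_mul]
    ring
  refine ⟨hA, ?_⟩
  intro x hxmem y hymem i hxi hyeq
  have hx : ∀ q, zload x q = α q := mem_pwl.mp hxmem
  have hQ : relaxedLogitKernel c T x y
      = (1 / (2 * (n : ℝ))) * (Real.exp (-T * PhiL (loadMove α p p'))
          / ∑ r : {A : Finset E // A ∈ P}, Real.exp (-T * PhiL (loadMove α p r))) := by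
    rw [hyeq]
    exact Q_update c T PhiL hPhiL hpp' hαp hx hxi
  have hZpos : 0 < sZ c T n P :=
    Finset.sum_pos (fun t _ => Real.exp_pos _) Finset.univ_nonempty
  have hπpos : 0 < ∑ x' ∈ profilesWithLoad n P α, sGibbs c T x' :=
    Finset.sum_pos (fun t _ => div_pos (Real.exp_pos _) hZpos) ⟨x, hxmem⟩
  have hαppos : (0 : ℝ) < (α p : ℝ) := by exact_mod_cast hαp
  have hnpos : (0 : ℝ) < (n : ℝ) := by exact_mod_cast hn
  constructor
  · rw [hQ, hA]
    field_simp
  · have hle : α p ≤ n := by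
      rw [← hα]
      exact Finset.single_le_sum (fun _ _ => Nat.zero_le _) (Finset.mem_univ p)
    exact one_div_le_one_div_of_le hαppos (by exact_mod_cast hle)


end
end
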